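/- Let ω, μ₀, β, λ > 0 and define k_λ(x) = (2β/ω)∫₀ˣ exp(−(λ+μ₀)(x−y)/ω − β(x²−y²)/(2ω)) dy. Then for all x ≥ 0: 2βx/(ω + (λ+μ₀+βx)x) ≤ k_λ(x) ≤ 2β/(λ+μ₀). -/

import Mathlib

open Real intervalIntegral

/-- Value of ∫₀ˣ exp(-(a(x-y))) dy. -/
lemma int_exp_aux (a x : ℝ) (ha : a ≠ 0) :
    ∫ y in (0:ℝ)..x, Real.exp (-(a * (x - y))) = (1 - Real.exp (-(a * x))) / a := by
  have h : ∀ y : ℝ, Real.exp (-(a * (x - y))) = Real.exp (-(a * x)) * Real.exp (a * y) := by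
    intro y; rw [← Real.exp_add]; ring_nf
  simp_rw [h]
  rw [intervalIntegral.integral_const_mul,
    intervalIntegral.integral_comp_mul_left (fun t => Real.exp t) ha]
  simp only [mul_zero, smul_eq_mul, integral_exp, Real.exp_zero]
  rw [Real.exp_neg]
  field_simp

lemma one_sub_exp_neg_ge (s : ℝ) (hs : 0 ≤ s) : s / (1 + s) ≤ 1 - Real.exp (-s) := by
  have h1 : 1 + s ≤ Real.exp s := by linarith [Real.add_one_le_exp s]
  have hpos : (0:ℝ) < 1 + s := by linarith
  have h2 : Real.exp (-s) ≤ 1 / (1 + s) := by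
    rw [Real.exp_neg, inv_eq_one_div]
    exact one_div_le_one_div_of_le hpos h1
  have h3 : 1 - 1 / (1 + s) = s / (1 + s) := by field_simp; ring
  linarith

set_option maxHeartbeats 1000000 in
/-- Two-sided bound for the kernel k_λ appearing in the resolvent representation:
2βx/(ω + (λ+μ₀+βx)x) ≤ k_λ(x) ≤ 2β/(λ+μ₀) for all x ≥ 0. -/
theorem kernel_k_bounds
    (ω μ₀ β lam : ℝ) (hω : 0 < ω) (hμ₀ : 0 < μ₀) (hβ : 0 < β) (hlam : 0 < lam)
    (k : ℝ → ℝ)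
    (hk : ∀ x, k x = (2 * β / ω) * ∫ y in (0:ℝ)..x,
      Real.exp (-(lam + μ₀) * (x - y) / ω - β * (x ^ 2 - y ^ 2) / (2 * ω))) :
    ∀ x ≥ 0, 2 * β * x / (ω + (lam + μ₀ + β * x) * x) ≤ k x ∧
      k x ≤ 2 * β / (lam + μ₀) := by
  intro x hx
  have hlm : 0 < lam + μ₀ := by linarith
  obtain ⟨c, hc⟩ : ∃ c : ℝ, c = (lam + μ₀) / ω := ⟨_, rfl⟩
  obtain ⟨a, ha⟩ : ∃ a : ℝ, a = (lam + μ₀ + β * x) / ω := ⟨_, rfl⟩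
  have hbx : 0 ≤ β * x := mul_nonneg hβ.le hx
  have hcpos : 0 < c := hc ▸ div_pos hlm hω
  have hapos : 0 < a := ha ▸ div_pos (by linarith) hω
  have hcoef : 0 < 2 * β / ω := div_pos (by linarith) hω
  have hcont : ∀ g : ℝ → ℝ, Continuous g →
      IntervalIntegrable (fun y => Real.exp (g y)) MeasureTheory.volume 0 x := by
    intro g hg
    exact (Real.continuous_exp.comp hg).intervalIntegrable 0 x
  have hInt0 : IntervalIntegrable (fun y =>
      Real.exp (-(lam + μ₀) * (x - y) / ω - β * (x ^ 2 - y ^ 2) / (2 * ω)))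
      MeasureTheory.volume 0 x := hcont _ (by continuity)
  have hIntc : IntervalIntegrable (fun y => Real.exp (-(c * (x - y))))
      MeasureTheory.volume 0 x := hcont _ (by continuity)
  have hInta : IntervalIntegrable (fun y => Real.exp (-(a * (x - y))))
      MeasureTheory.volume 0 x := hcont _ (by continuity)
  constructor
  · -- lower bound
    have hmono : ∫ y in (0:ℝ)..x, Real.exp (-(a * (x - y))) ≤
        ∫ y in (0:ℝ)..x, Real.exp (-(lam + μ₀) * (x - y) / ω - β * (x ^ 2 - y ^ 2) / (2 * ω)) := by
      apply intervalIntegral.integral_mono_on hx hInta hInt0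
      intro y hy
      rw [Set.mem_Icc] at hy
      apply Real.exp_le_exp.mpr
      rw [← sub_nonneg, ha]
      have heq : -(lam + μ₀) * (x - y) / ω - β * (x ^ 2 - y ^ 2) / (2 * ω) -
          -((lam + μ₀ + β * x) / ω * (x - y)) = β * (x - y) ^ 2 / (2 * ω) := by
        field_simp
        ring
      rw [heq]
      have : 0 ≤ (x - y) ^ 2 := sq_nonneg _
      positivity
    have hval : ∫ y in (0:ℝ)..x, Real.exp (-(a * (x - y))) = (1 - Real.exp (-(a * x))) / a :=
      int_exp_aux a x (ne_of_gt hapos)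
    have haxpos : 0 < 1 + a * x := by nlinarith
    have hlow : x / (1 + a * x) ≤ (1 - Real.exp (-(a * x))) / a := by
      have h5 := one_sub_exp_neg_ge (a * x) (by positivity)
      rw [div_le_div_iff₀ haxpos hapos]
      rw [div_le_iff₀ haxpos] at h5
      nlinarith
    have h1 : 2 * β / ω * (x / (1 + a * x)) ≤ k x := by
      rw [hk x]
      have h2 : x / (1 + a * x) ≤ ∫ y in (0:ℝ)..x,
          Real.exp (-(lam + μ₀) * (x - y) / ω - β * (x ^ 2 - y ^ 2) / (2 * ω)) := by
        calc x / (1 + a * x) ≤ (1 - Real.exp (-(a * x))) / a := hlow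
          _ = ∫ y in (0:ℝ)..x, Real.exp (-(a * (x - y))) := hval.symm
          _ ≤ _ := hmono
      exact mul_le_mul_of_nonneg_left h2 (le_of_lt hcoef)
    refine le_trans (le_of_eq ?_) h1
    have h3 : 0 < ω + (lam + μ₀ + β * x) * x := by
      have h4 : 0 ≤ (lam + μ₀ + β * x) * x := mul_nonneg (by linarith) hx
      linarith
    rw [ha]
    field_simp
  · -- upper bound
    have hmono : (∫ y in (0:ℝ)..x,
        Real.exp (-(lam + μ₀) * (x - y) / ω - β * (x ^ 2 - y ^ 2) / (2 * ω))) ≤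
        ∫ y in (0:ℝ)..x, Real.exp (-(c * (x - y))) := by
      apply intervalIntegral.integral_mono_on hx hInt0 hIntc
      intro y hy
      rw [Set.mem_Icc] at hy
      apply Real.exp_le_exp.mpr
      rw [hc]
      have h1 : -((lam + μ₀) / ω * (x - y)) = -(lam + μ₀) * (x - y) / ω := by ring
      rw [h1]
      have h2 : 0 ≤ β * (x ^ 2 - y ^ 2) / (2 * ω) := by
        apply div_nonneg _ (by positivity)
        have hxy : 0 ≤ (x - y) * (x + y) := mul_nonneg (by linarith [hy.2]) (by linarith [hy.1, hy.2])
        nlinarith [mul_nonneg hβ.le hxy]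
      linarith
    have hval : ∫ y in (0:ℝ)..x, Real.exp (-(c * (x - y))) = (1 - Real.exp (-(c * x))) / c :=
      int_exp_aux c x (ne_of_gt hcpos)
    have hup : (1 - Real.exp (-(c * x))) / c ≤ 1 / c := by
      gcongr
      linarith [Real.exp_pos (-(c * x))]
    rw [hk x]
    calc 2 * β / ω * ∫ y in (0:ℝ)..x,
        Real.exp (-(lam + μ₀) * (x - y) / ω - β * (x ^ 2 - y ^ 2) / (2 * ω))
        ≤ 2 * β / ω * ((1 - Real.exp (-(c * x))) / c) :=
          mul_le_mul_of_nonneg_left (hmono.trans_eq hval) (le_of_lt hcoef)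
      _ ≤ 2 * β / ω * (1 / c) := mul_le_mul_of_nonneg_left hup (le_of_lt hcoef)
      _ = 2 * β / (lam + μ₀) := by rw [hc]; field_simp
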